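/- For the 'always on M-th request' TTL policy with T = R, the total delivery cost on any request sequence is at most (M+1) times the optimal offline cost, T = R minimizes the worst-case competitive ratio over all T, and the ratio M+1 is attained in the limit by request sequences consisting of batches of M near-simultaneous requests separated by more than max(T, R). -/

import Mathlib

/-- One step of the `always on M-th request` TTL policy.  The state is
`(counter, cached, accumulated cost)`; `g` is the time gap since the
previous request.  A cached object refreshed within `T` incurs storage cost `g`;
if the gap exceeds `T` the object was evicted after `T` time units (storage
cost `T`), the counter is reset and the request is a miss (cost `R`), setting
the counter to `1` (cached again iff `M ≤ 1`).  A request to the uncached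
object costs `R` and increments the counter; the object is cached once the
counter reaches `M`. -/
noncomputable def alwaysStep (R T : ℝ) (M : ℕ) : ℕ × Bool × ℝ → ℝ → ℕ × Bool × ℝ :=
  fun s g =>
    if s.2.1 then
      if g ≤ T then (s.1, true, s.2.2 + g)
      else (1, decide (M ≤ 1), s.2.2 + T + R)
    else
      (s.1 + 1, decide (M ≤ s.1 + 1), s.2.2 + R)

/-- Total cost of the `always on M-th` policy on the list of inter-request gaps
(the first request is a miss costing `R`; a final storage cost `T` is paid if
the object is cached after the last request). -/
noncomputable def alwaysCost (R T : ℝ) (M : ℕ) (gaps : List ℝ) : ℝ :=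
  let s := gaps.foldl (alwaysStep R T M) (1, decide (M ≤ 1), R)
  s.2.2 + (if s.2.1 then T else 0)

/-- Optimal offline cost `R + ∑ min (gap, R)`. -/
noncomputable def optCost (R : ℝ) (gaps : List ℝ) : ℝ :=
  R + (gaps.map (fun g => min g R)).sum

/-- With `T = R`, the `always on M-th` cost is at most `M + 1`
times the optimal offline cost on every request sequence; and for every
`T > 0` the worst-case ratio is at least `M + 1` (attained in the limit by
batches of `M` near-simultaneous requests separated by more than `max T R`),
so `T = R` minimizes the worst-case competitive ratio and `M + 1` is tight. -/
lemma key (R : ℝ) (hR : 0 < R) (M : ℕ) (hM : 1 ≤ M) :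
    ∀ (gaps : List ℝ), (∀ g ∈ gaps, 0 < g) → ∀ (c : ℕ) (b : Bool) (A O : ℝ),
    (b = true → A + R ≤ (M + 1) * O) →
    (b = false → c < M ∧ A + ((M : ℝ) + 1 - c) * R ≤ (M + 1) * O) →
    ((gaps.foldl (alwaysStep R R M) (c, b, A)).2.1 = true →
      (gaps.foldl (alwaysStep R R M) (c, b, A)).2.2 + R ≤
        (M + 1) * (O + (gaps.map (fun g => min g R)).sum)) ∧
    ((gaps.foldl (alwaysStep R R M) (c, b, A)).2.1 = false →
      (gaps.foldl (alwaysStep R R M) (c, b, A)).1 < M ∧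
      (gaps.foldl (alwaysStep R R M) (c, b, A)).2.2 +
        ((M : ℝ) + 1 - (gaps.foldl (alwaysStep R R M) (c, b, A)).1) * R ≤
        (M + 1) * (O + (gaps.map (fun g => min g R)).sum)) := by
  intro gaps
  induction gaps with
  | nil =>
    intro _ c b A O h1 h2
    simp only [List.foldl_nil, List.map_nil, List.sum_nil, add_zero]
    exact ⟨h1, h2⟩
  | cons g gs ih =>
    intro hpos c b A O h1 h2
    have hg : 0 < g := hpos g (by simp)
    have hpos' : ∀ x ∈ gs, 0 < x := fun x hx => hpos x (by simp [hx])
    simp only [List.foldl_cons, List.map_cons, List.sum_cons]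
    have hMR : (1 : ℝ) ≤ (M : ℝ) := by exact_mod_cast hM
    cases b with
    | true =>
      have hA : A + R ≤ (M + 1) * O := h1 rfl
      by_cases hgR : g ≤ R
      · have hmin : min g R = g := min_eq_left hgR
        have := ih hpos' c true (A + g) (O + min g R)
          (fun _ => by rw [hmin]; nlinarith)
          (fun h => by simp at h)
        simpa [alwaysStep, hgR, add_assoc, add_comm, add_left_comm] using this
      · have hmin : min g R = R := min_eq_right (le_of_not_ge hgR)
        by_cases hM1 : M ≤ 1
        · have hMeq : M = 1 := le_antisymm hM1 hM
          have := ih hpos' 1 true (A + R + R) (O + min g R)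
            (fun _ => by rw [hmin]; nlinarith [mul_nonneg (sub_nonneg.mpr hMR) hR.le])
            (fun h => by simp [hM1] at h)
          simpa [alwaysStep, hgR, hM1, add_assoc, add_comm, add_left_comm] using this
        · have hd : decide (M ≤ 1) = false := by simp [hM1]
          have := ih hpos' 1 false (A + R + R) (O + min g R)
            (fun h => by simp at h)
            (fun _ => ⟨by omega, by rw [hmin]; push_cast; nlinarith⟩)
          simpa [alwaysStep, hgR, hd, add_assoc, add_comm, add_left_comm] using this
    | false =>
      obtain ⟨hcM, hA⟩ := h2 rfl
      have hminpos : 0 ≤ min g R := le_min hg.le hR.le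
      have hcR : (c : ℝ) ≤ (M : ℝ) - 1 := by
        have : (c : ℝ) + 1 ≤ (M : ℝ) := by exact_mod_cast hcM
        linarith
      by_cases hle : M ≤ c + 1
      · have hceq : c + 1 = M := by omega
        have hd : decide (M ≤ c + 1) = true := by simp [hle]
        have hc' : (c : ℝ) = (M : ℝ) - 1 := by
          have : ((c : ℕ) : ℝ) + 1 = (M : ℝ) := by exact_mod_cast hceq
          linarith
        have := ih hpos' (c + 1) true (A + R) (O + min g R)
          (fun _ => by rw [hc'] at hA; nlinarith [mul_nonneg (by linarith : (0:ℝ) ≤ (M:ℝ)+1) hminpos])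
          (fun h => by simp at h)
        simpa [alwaysStep, hd, add_assoc, add_comm, add_left_comm] using this
      · have hd : decide (M ≤ c + 1) = false := by simp [hle]
        have := ih hpos' (c + 1) false (A + R) (O + min g R)
          (fun h => by simp at h)
          (fun _ => ⟨by omega, by push_cast; nlinarith [mul_nonneg (by linarith : (0:ℝ) ≤ (M:ℝ)+1) hminpos]⟩)
        simpa [alwaysStep, hd, add_assoc, add_comm, add_left_comm] using this

lemma foldBatch (R T δ : ℝ) (M : ℕ) :
    ∀ (k c : ℕ) (A : ℝ), c + k = M → 1 ≤ k →
    (List.replicate k δ).foldl (alwaysStep R T M) (c, false, A) =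
      (M, true, A + k * R) := by
  intro k
  induction k with
  | zero => omega
  | succ n ihn =>
    intro c A hck _
    rw [List.replicate_succ, List.foldl_cons]
    have hstep : alwaysStep R T M (c, false, A) δ =
        (c + 1, decide (M ≤ c + 1), A + R) := rfl
    by_cases hn : n = 0
    · subst hn
      have hle : M ≤ c + 1 := by omega
      rw [hstep]
      simp only [decide_eq_true hle, List.replicate_zero, List.foldl_nil, Prod.mk.injEq]
      refine ⟨by omega, trivial, by push_cast; ring⟩
    · have hlt : ¬ M ≤ c + 1 := by omega
      rw [hstep]
      simp only [decide_eq_false hlt]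
      rw [ihn (c+1) (A+R) (by omega) (by omega)]
      simp only [Prod.mk.injEq]
      refine ⟨trivial, trivial, by push_cast; ring⟩

def badSeq (δ G : ℝ) (M : ℕ) : ℕ → List ℝ
  | 0 => List.replicate (M - 1) δ
  | n + 1 => badSeq δ G M n ++ (G :: List.replicate (M - 1) δ)

lemma badSeq_pos (δ G : ℝ) (M : ℕ) (hδ : 0 < δ) (hG : 0 < G) :
    ∀ n, ∀ g ∈ badSeq δ G M n, 0 < g := by
  intro n
  induction n with
  | zero => intro g hg; simp [badSeq] at hg; simpa [hg.2]
  | succ n ihn =>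
    intro g hg
    simp only [badSeq, List.mem_append, List.mem_cons, List.mem_replicate] at hg
    rcases hg with h | h | h
    · exact ihn g h
    · simpa [h]
    · simpa [h.2]

lemma startBatch (R T δ : ℝ) (M : ℕ) (hM : 1 ≤ M) :
    (List.replicate (M - 1) δ).foldl (alwaysStep R T M) (1, decide (M ≤ 1), R) =
      (M, true, M * R) := by
  by_cases h1 : M ≤ 1
  · have : M = 1 := by omega
    subst this
    simp
  · have hd : decide (M ≤ 1) = false := by simp [h1]
    rw [hd, foldBatch R T δ M (M-1) 1 R (by omega) (by omega)]
    have : ((M - 1 : ℕ) : ℝ) = (M : ℝ) - 1 := by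
      push_cast [Nat.cast_sub hM]; ring
    rw [this]; ring_nf

lemma cachedBatch (R T δ G : ℝ) (M : ℕ) (hM : 1 ≤ M) (hG : ¬ G ≤ T) (A : ℝ) :
    (G :: List.replicate (M - 1) δ).foldl (alwaysStep R T M) (M, true, A) =
      (M, true, A + T + M * R) := by
  rw [List.foldl_cons]
  have hstep : alwaysStep R T M (M, true, A) G = (1, decide (M ≤ 1), A + T + R) := by
    simp [alwaysStep, hG]
  rw [hstep]
  by_cases h1 : M ≤ 1
  · have : M = 1 := by omega
    subst this
    simp
  · have hd : decide (M ≤ 1) = false := by simp [h1]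
    rw [hd, foldBatch R T δ M (M-1) 1 (A+T+R) (by omega) (by omega)]
    have : ((M - 1 : ℕ) : ℝ) = (M : ℝ) - 1 := by
      push_cast [Nat.cast_sub hM]; ring
    rw [this]; ring_nf

lemma badFold (R T δ G : ℝ) (M : ℕ) (hM : 1 ≤ M) (hG : ¬ G ≤ T) :
    ∀ n, (badSeq δ G M n).foldl (alwaysStep R T M) (1, decide (M ≤ 1), R) =
      (M, true, M * R + n * (T + M * R)) := by
  intro n
  induction n with
  | zero => rw [badSeq, startBatch R T δ M hM]; norm_num
  | succ n ihn =>
    rw [badSeq, List.foldl_append, ihn, cachedBatch R T δ G M hM hG]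
    push_cast; norm_num; ring

lemma badSum (R δ G : ℝ) (M : ℕ) (hM : 1 ≤ M) (hδ : δ ≤ R) :
    ∀ n, ((badSeq δ G M n).map (fun g => min g R)).sum =
      ((n : ℝ) + 1) * ((M : ℝ) - 1) * δ + n * min G R := by
  have hmin : min δ R = δ := min_eq_left hδ
  have hcast : ((M - 1 : ℕ) : ℝ) = (M : ℝ) - 1 := by
    push_cast [Nat.cast_sub hM]; ring
  have hbatch : ((List.replicate (M - 1) δ).map (fun g => min g R)).sum =
      ((M : ℝ) - 1) * δ := by
    rw [List.map_replicate, hmin, List.sum_replicate, nsmul_eq_mul, hcast]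
  intro n
  induction n with
  | zero => rw [badSeq, hbatch]; push_cast; ring
  | succ n ihn =>
    rw [badSeq, List.map_append, List.sum_append, ihn]
    simp only [List.map_cons, List.sum_cons, hbatch]
    push_cast; ring

lemma upperPart (R : ℝ) (hR : 0 < R) (M : ℕ) (hM : 1 ≤ M) :
    ∀ gaps : List ℝ, (∀ g ∈ gaps, 0 < g) →
      alwaysCost R R M gaps ≤ (M + 1) * optCost R gaps := by
  have hMR : (1 : ℝ) ≤ (M : ℝ) := by exact_mod_cast hM
  intro gaps hpos
  have h1 : decide (M ≤ 1) = true → R + R ≤ ((M : ℝ) + 1) * R := by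
    intro _; nlinarith
  have h2 : decide (M ≤ 1) = false → 1 < M ∧
      R + ((M : ℝ) + 1 - (1 : ℕ)) * R ≤ ((M : ℝ) + 1) * R := by
    intro h
    have : ¬ M ≤ 1 := by simpa using h
    exact ⟨by omega, by push_cast; nlinarith⟩
  have hkey := key R hR M hM gaps hpos 1 (decide (M ≤ 1)) R R h1 h2
  unfold alwaysCost optCost
  set s := gaps.foldl (alwaysStep R R M) (1, decide (M ≤ 1), R) with hs
  cases hb : s.2.1 with
  | true =>
    simp only [hb, if_true]
    exact hkey.1 hb
  | false =>
    obtain ⟨hc, hineq⟩ := hkey.2 hb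
    have hcR : ((s.1 : ℝ)) ≤ (M : ℝ) - 1 := by
      have : (s.1 : ℝ) + 1 ≤ (M : ℝ) := by exact_mod_cast hc
      linarith
    have hgoal : (let s := s; s.2.2 + if s.2.1 = true then R else 0) = s.2.2 := by
      simp [hb]
    rw [hgoal]
    nlinarith [mul_nonneg (by linarith : (0:ℝ) ≤ (M : ℝ) + 1 - (s.1 : ℝ)) hR.le]

set_option maxHeartbeats 1000000 in
lemma lowerPart (R : ℝ) (hR : 0 < R) (M : ℕ) (hM : 1 ≤ M) :
    ∀ T, 0 < T → ∀ ε, 0 < ε → ∃ gaps : List ℝ,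
      (∀ g ∈ gaps, 0 < g) ∧
      ((M : ℝ) + 1 - ε) * optCost R gaps ≤ alwaysCost R T M gaps := by
  have hMR : (1 : ℝ) ≤ (M : ℝ) := by exact_mod_cast hM
  intro T hT ε hε
  by_cases hεbig : (M : ℝ) + 1 - ε ≤ 0
  · refine ⟨[], by simp, ?_⟩
    have h1 : alwaysCost R T M [] = R + (if decide (M ≤ 1) then T else 0) := rfl
    have h2 : optCost R [] = R := by simp [optCost]
    rw [h1, h2]
    have : (0:ℝ) ≤ (if decide (M ≤ 1) then T else 0) := by
      split <;> linarith
    nlinarith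
  · push_neg at hεbig
    have hcoeff : 0 < (M : ℝ) + 1 - ε := hεbig
    have hεlt : ε ≤ (M : ℝ) + 1 := by linarith
    set m := min T R with hm_def
    have hm : 0 < m := lt_min hT hR
    have hmR : m ≤ R := min_le_right T R
    have hM1 : (0:ℝ) < (M : ℝ) + 1 := by linarith
    set δ := ε * m / (2 * ((M : ℝ) + 1) * ((M : ℝ) + 1)) with hδ_def
    have hδpos : 0 < δ := by positivity
    have hδdef : 2 * ((M : ℝ) + 1) * ((M : ℝ) + 1) * δ = ε * m := by
      rw [hδ_def]; field_simp
    have hδ1 : 2 * ((M : ℝ) + 1) * ((M : ℝ) + 1) * δ ≤ ((M : ℝ) + 1) * m := by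
      nlinarith [mul_nonneg hcoeff.le hm.le]
    have hδ2 : 2 * ((M : ℝ) + 1) * δ ≤ m := by nlinarith [hδ1, hM1, hδpos]
    have hδR : δ ≤ R := by
      nlinarith [mul_nonneg (by linarith : (0:ℝ) ≤ 2 * ((M : ℝ) + 1) - 1) hδpos.le]
    set G := T + δ with hG_def
    have hGT : ¬ G ≤ T := by simp [hG_def]; linarith
    have hGpos : 0 < G := by simp [hG_def]; linarith
    have hεm : 0 < ε * m / 2 := by positivity
    obtain ⟨n, hn⟩ := exists_nat_ge (((M : ℝ) + 1) * R / (ε * m / 2))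
    have hA2 : ((M : ℝ) + 1) * R ≤ ((n : ℝ) + 1) * (ε * m / 2) := by
      have h := (div_le_iff₀ hεm).mp hn
      nlinarith
    refine ⟨badSeq δ G M n, badSeq_pos δ G M hδpos hGpos n, ?_⟩
    set N := (n : ℝ) + 1 with hN_def
    have hN1 : 1 ≤ N := by rw [hN_def]; have : (0:ℝ) ≤ (n:ℝ) := Nat.cast_nonneg n; linarith
    have hN0 : 0 ≤ N := by linarith
    -- compute alwaysCost
    have hAC : alwaysCost R T M (badSeq δ G M n) = N * ((M : ℝ) * R + T) := by
      unfold alwaysCost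
      rw [badFold R T δ G M hM hGT n]
      simp only [if_true]
      rw [hN_def]; ring
    -- compute optCost
    have hOC : optCost R (badSeq δ G M n) =
        R + N * ((M : ℝ) - 1) * δ + (N - 1) * min G R := by
      unfold optCost
      rw [badSum R δ G M hM hδR n, hN_def]
      push_cast; ring
    rw [hAC, hOC]
    have hGm : min G R ≤ m + δ := by
      have h1 : min G R ≤ min (T + δ) (R + δ) :=
        min_le_min (le_of_eq hG_def) (by linarith)
      have h2 : min (T + δ) (R + δ) = m + δ := by
        rw [hm_def, ← min_add_add_right]
      linarith
    have hMRT : ((M : ℝ) + 1) * m ≤ (M : ℝ) * R + T := by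
      have h1 : m ≤ T := min_le_left T R
      nlinarith [mul_le_mul_of_nonneg_left hmR (by positivity : (0:ℝ) ≤ (M : ℝ))]
    set B := R + N * (M : ℝ) * δ + (N - 1) * m with hB_def
    have hoptB : R + N * ((M : ℝ) - 1) * δ + (N - 1) * min G R ≤ B := by
      rw [hB_def]
      nlinarith [mul_le_mul_of_nonneg_left hGm (by linarith : (0:ℝ) ≤ N - 1)]
    have hbase : ((M : ℝ) + 1) * (M : ℝ) * δ ≤ ε * m / 2 := by nlinarith
    have hA1 : N * (((M : ℝ) + 1) * (M : ℝ) * δ) ≤ N * (ε * m / 2) :=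
      mul_le_mul_of_nonneg_left hbase hN0
    have hBge : (N - 1) * m ≤ B := by
      rw [hB_def]
      nlinarith [mul_nonneg (mul_nonneg hN0 (by linarith : (0:ℝ) ≤ (M:ℝ))) hδpos.le]
    have hA3 : ε * ((N - 1) * m) ≤ ε * B := mul_le_mul_of_nonneg_left hBge hε.le
    have hA4 : N * (((M : ℝ) + 1) * m) ≤ N * ((M : ℝ) * R + T) :=
      mul_le_mul_of_nonneg_left hMRT hN0
    have hA5 : ε * m ≤ ((M : ℝ) + 1) * m := by nlinarith
    have hstep1 : ((M : ℝ) + 1 - ε) * (R + N * ((M : ℝ) - 1) * δ + (N - 1) * min G R)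
        ≤ ((M : ℝ) + 1 - ε) * B := mul_le_mul_of_nonneg_left hoptB hcoeff.le
    have hstep2 : ((M : ℝ) + 1 - ε) * B ≤ N * ((M : ℝ) * R + T) := by
      have hA2' : ((M : ℝ) + 1) * R ≤ N * (ε * m / 2) := by rw [hN_def]; exact hA2
      nlinarith [hA1, hA2', hA3, hA4, hA5]
    linarith

theorem always_on_Mth_competitive (R : ℝ) (hR : 0 < R) (M : ℕ) (hM : 1 ≤ M) :
    (∀ gaps : List ℝ, (∀ g ∈ gaps, 0 < g) →
      alwaysCost R R M gaps ≤ (M + 1) * optCost R gaps) ∧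
    (∀ T, 0 < T → ∀ ε, 0 < ε → ∃ gaps : List ℝ,
      (∀ g ∈ gaps, 0 < g) ∧
      ((M : ℝ) + 1 - ε) * optCost R gaps ≤ alwaysCost R T M gaps) :=
  ⟨upperPart R hR M hM, lowerPart R hR M hM⟩
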